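/- Let G be a graph admitting an orientation with no directed odd cycle and maximum out-degree at most D. Then the Alon–Tarsi number of G is at most D + 1. -/

import Mathlib

/-- An orientation of a simple graph: each edge gets exactly one direction. -/
structure GraphOrientation {V : Type*} (G : SimpleGraph V) where
  dir : V → V → Prop
  consistent : ∀ u v, G.Adj u v ↔ (dir u v ∨ dir v u)
  antisymm : ∀ u v, dir u v → ¬ dir v u

/-- The out-degree of a vertex in an orientation. -/
noncomputable def outDeg {V : Type*} {G : SimpleGraph V} (o : GraphOrientation G) (v : V) : ℕ :=
  Nat.card {u : V // o.dir v u}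

/-- The in-degree of a vertex in an orientation. -/
noncomputable def inDeg {V : Type*} {G : SimpleGraph V} (o : GraphOrientation G) (v : V) : ℕ :=
  Nat.card {u : V // o.dir u v}

/-- A spanning Eulerian subdigraph of an orientation, given by its set of directed edges:
every edge is an edge of the orientation, and every vertex has equal out- and in-degree. -/
def IsEulerian {V : Type*} {G : SimpleGraph V} (o : GraphOrientation G) (A : Finset (V × V)) : Prop :=
  (∀ p ∈ A, o.dir p.1 p.2) ∧
  ∀ v : V, Nat.card {p : V × V // p ∈ A ∧ p.1 = v} = Nat.card {p : V × V // p ∈ A ∧ p.2 = v}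

/-- The number of even Eulerian spanning subdigraphs. -/
noncomputable def EE {V : Type*} {G : SimpleGraph V} (o : GraphOrientation G) : ℕ :=
  Nat.card {A : Finset (V × V) // IsEulerian o A ∧ Even A.card}

/-- The number of odd Eulerian spanning subdigraphs. -/
noncomputable def EO {V : Type*} {G : SimpleGraph V} (o : GraphOrientation G) : ℕ :=
  Nat.card {A : Finset (V × V) // IsEulerian o A ∧ Odd A.card}

/-- An Alon–Tarsi orientation: the numbers of even and odd Eulerian subdigraphs differ. -/
def AlonTarsiOrientation {V : Type*} {G : SimpleGraph V} (o : GraphOrientation G) : Prop :=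
  EE o ≠ EO o

/-- A list `v :: l` is a directed cycle for the relation `dir` if its vertices are distinct
and `dir` holds along consecutive vertices, wrapping back to `v`. -/
def IsDirCycle {V : Type*} (dir : V → V → Prop) : List V → Prop
  | [] => False
  | v :: l => (v :: l).Nodup ∧ List.Chain dir v (l ++ [v])

/-- The relation `dir` admits some directed cycle. -/
def HasDirCycle {V : Type*} (dir : V → V → Prop) : Prop :=
  ∃ l : List V, IsDirCycle dir l

/-- The relation `dir` admits a directed cycle of odd length. -/
def HasOddDirCycle {V : Type*} (dir : V → V → Prop) : Prop :=
  ∃ l : List V, IsDirCycle dir l ∧ Odd l.length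

/-- The Alon–Tarsi number of `G`: the least `k` such that `G` has an Alon–Tarsi
orientation with all out-degrees `< k`. -/
noncomputable def ATNumber {V : Type*} (G : SimpleGraph V) : ℕ :=
  sInf {k : ℕ | ∃ o : GraphOrientation G, (∀ v, outDeg o v < k) ∧ AlonTarsiOrientation o}

section AuxCycle

variable {V : Type*} [DecidableEq V]

lemma aux_chain'_zip_mem {r : V → V → Prop} :
    ∀ (l : List V) (b : V), List.Chain' r (l ++ [b]) →
      ∀ p ∈ l.zip (l.tail ++ [b]), r p.1 p.2
  | [], _, _, p, hp => by simp at hp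
  | [a], b, h, p, hp => by
    simp only [List.tail_cons, List.nil_append, List.zip_cons_cons, List.zip_nil_left,
      List.mem_singleton] at hp
    subst hp
    simpa using List.isChain_pair.mp h
  | a :: c :: l, b, h, p, hp => by
    rw [List.cons_append, List.cons_append] at h
    replace h := List.isChain_cons_cons.mp h
    simp only [List.tail_cons, List.cons_append, List.zip_cons_cons, List.mem_cons] at hp
    rcases hp with rfl | hp
    · exact h.1
    · exact aux_chain'_zip_mem (c :: l) b h.2 p (by simpa using hp)

lemma aux_chain'_last {r : V → V → Prop} : ∀ (a b : V) (l : List V),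
    List.Chain' r (a :: b :: l) → ∃ x, r x ((b :: l).getLast (by simp)) := by
  intro a b l
  induction l generalizing a b with
  | nil => intro h; exact ⟨a, by simpa using List.isChain_pair.mp h⟩
  | cons c l ih =>
    intro h
    replace h := List.isChain_cons_cons.mp h
    rw [List.getLast_cons (by simp)]
    exact ih b c h.2

lemma aux_head?_dropWhile_ne {u : V} : ∀ (l : List V), u ∈ l →
    (l.dropWhile (fun x => decide (x ≠ u))).head? = some u := by
  intro l hl
  induction l with
  | nil => simp at hl
  | cons a l ih =>
    rw [List.dropWhile_cons]
    by_cases h : a = u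
    · subst h; simp
    · rw [if_pos (by simp [h])]
      exact ih (by rcases List.mem_cons.mp hl with rfl | hl'
                   · exact absurd rfl h
                   · exact hl')

/-- From an edge and the "in-edge implies out-edge" property, extract a directed cycle. -/
lemma aux_exists_dirCycle [Fintype V] {r : V → V → Prop}
    (hbal : ∀ v, (∃ u, r u v) → ∃ w, r v w)
    (hne : ∃ u w, r u w) : ∃ l, IsDirCycle r l := by
  obtain ⟨v0, w0, h0⟩ := hne
  set S : Set ℕ := {n | ∃ l : List V, l.Chain' r ∧ l.Nodup ∧ l.head? = some v0 ∧ l.length = n}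
    with hS
  have hScon : 1 ∈ S := ⟨[v0], List.isChain_singleton v0, by simp, rfl, rfl⟩
  have hbdd : BddAbove S := by
    refine ⟨Fintype.card V, fun n hn => ?_⟩
    obtain ⟨l, _, hnd, _, rfl⟩ := hn
    exact hnd.length_le_card
  obtain ⟨l, hch, hnd, hhead, hlen⟩ := Nat.sSup_mem ⟨1, hScon⟩ hbdd
  have hmax : ∀ l' : List V, l'.Chain' r → l'.Nodup → l'.head? = some v0 →
      l'.length ≤ sSup S := fun l' h1 h2 h3 => le_csSup hbdd ⟨l', h1, h2, h3, rfl⟩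
  obtain ⟨v0', rest, rfl⟩ : ∃ a t, l = a :: t := by
    cases l with
    | nil => simp at hhead
    | cons a t => exact ⟨a, t, rfl⟩
  have hv0 : v0' = v0 := by simpa using hhead
  have hlne : (v0' :: rest) ≠ [] := by simp
  set w := (v0' :: rest).getLast hlne with hw
  have hwlast : (v0' :: rest).getLast? = some w := List.getLast?_eq_getLast hlne
  -- w has an outgoing edge
  have hout : ∃ u, r w u := by
    cases rest with
    | nil => exact ⟨w0, by rw [hw]; simp only [List.getLast_singleton]; rw [hv0]; exact h0⟩
    | cons b t =>
      obtain ⟨x, hx⟩ := aux_chain'_last v0' b t hch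
      refine hbal w ⟨x, ?_⟩
      have hweq : w = (b :: t).getLast (by simp) := by
        rw [hw, List.getLast_cons (by simp)]
      rwa [hweq]
  obtain ⟨u, hu⟩ := hout
  have humem : u ∈ (v0' :: rest) := by
    by_contra hnot
    have h1 : ((v0' :: rest) ++ [u]).Chain' r := by
      refine List.isChain_append.mpr ?_
      refine ⟨hch, by simp, ?_⟩
      intro x hx y hy
      simp only [List.head?_cons, Option.mem_def, Option.some.injEq] at hy
      rw [hwlast, Option.mem_def, Option.some.injEq] at hx
      subst hy; subst hx; exact hu
    have h2 : ((v0' :: rest) ++ [u]).Nodup := by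
      rw [List.nodup_append]
      exact ⟨hnd, by simp, by intro a ha b hb; simp at hb; subst hb; rintro rfl; exact hnot ha⟩
    have h3 : ((v0' :: rest) ++ [u]).head? = some v0 := by simp [hv0]
    have := hmax _ h1 h2 h3
    rw [← hlen] at this
    simp only [List.length_append, List.length_cons, List.length_nil] at this
    omega
  -- the cycle: the suffix of l starting at u
  obtain ⟨c, hc⟩ : ∃ c, c = (v0' :: rest).dropWhile (fun x => decide (x ≠ u)) := ⟨_, rfl⟩
  have hsuf : c <:+ (v0' :: rest) := by rw [hc]; exact List.dropWhile_suffix _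
  have hchead : c.head? = some u := by rw [hc]; exact aux_head?_dropWhile_ne _ humem
  have hcne : c ≠ [] := by intro h; rw [h] at hchead; simp at hchead
  have hcnd : c.Nodup := hnd.sublist hsuf.sublist
  have hcch : c.Chain' r := hch.suffix hsuf
  have hclast : c.getLast? = some w := by
    obtain ⟨t, ht⟩ := hsuf
    rw [← List.getLast?_append_of_ne_nil t hcne, ht, hwlast]
  obtain ⟨u', tl, rfl⟩ : ∃ a t, c = a :: t := by
    cases c with
    | nil => exact absurd rfl hcne
    | cons a t => exact ⟨a, t, rfl⟩
  have hu' : u' = u := by simpa using hchead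
  subst hu'
  refine ⟨u' :: tl, hcnd, ?_⟩
  have hfull : List.Chain' r ((u' :: tl) ++ [u']) := by
    refine List.isChain_append.mpr ?_
    refine ⟨hcch, by simp, ?_⟩
    intro x hx y hy
    simp only [List.head?_cons, Option.mem_def, Option.some.injEq] at hy
    rw [hclast, Option.mem_def, Option.some.injEq] at hx
    subst hy; subst hx; exact hu
  rw [List.cons_append] at hfull
  exact hfull

end AuxCycle

section AuxEuler

variable {V : Type*} [Fintype V] [DecidableEq V] {G : SimpleGraph V}

lemma aux_natcard_filter (A : Finset (V × V)) (P : V × V → Prop) [DecidablePred P] :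
    Nat.card {p : V × V // p ∈ A ∧ P p} = (A.filter P).card := by
  rw [Nat.card_eq_fintype_card, Fintype.card_subtype]
  congr 1
  ext p
  simp

lemma aux_isEulerian_iff (o : GraphOrientation G) (A : Finset (V × V)) :
    IsEulerian o A ↔ (∀ p ∈ A, o.dir p.1 p.2) ∧
      ∀ v, (A.filter (fun p => p.1 = v)).card = (A.filter (fun p => p.2 = v)).card := by
  unfold IsEulerian
  simp_rw [aux_natcard_filter]

lemma aux_eulerian_even (o : GraphOrientation G) (hodd : ¬ HasOddDirCycle o.dir) :
    ∀ n (A : Finset (V × V)), A.card ≤ n → IsEulerian o A → Even A.card := by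
  intro n
  induction n with
  | zero =>
    intro A hA _
    rw [Finset.card_eq_zero.mp (Nat.le_zero.mp hA)]
    simp
  | succ n ih =>
    intro A hAcard hE
    rcases A.eq_empty_or_nonempty with rfl | hne
    · simp
    rw [aux_isEulerian_iff] at hE
    set r : V → V → Prop := fun a b => (a, b) ∈ A with hr
    have hbal : ∀ v, (∃ u, r u v) → ∃ w, r v w := by
      rintro v ⟨u, hu⟩
      have hin : 0 < (A.filter (fun p => p.2 = v)).card :=
        Finset.card_pos.mpr ⟨(u, v), Finset.mem_filter.mpr ⟨hu, rfl⟩⟩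
      rw [← hE.2] at hin
      obtain ⟨⟨a, b⟩, hp⟩ := Finset.card_pos.mp hin
      rw [Finset.mem_filter] at hp
      exact ⟨b, by rw [hr]; simpa using hp.2 ▸ hp.1⟩
    have hedge : ∃ u w, r u w := by
      obtain ⟨⟨a, b⟩, hab⟩ := hne
      exact ⟨a, b, hab⟩
    obtain ⟨l, hcyc⟩ := aux_exists_dirCycle hbal hedge
    obtain ⟨u, tl, rfl⟩ : ∃ a t, l = a :: t := by
      cases l with
      | nil => exact absurd hcyc (by simp [IsDirCycle])
      | cons a t => exact ⟨a, t, rfl⟩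
    obtain ⟨hnd, hchain⟩ := hcyc
    set d : List V := tl ++ [u] with hd
    set E : List (V × V) := (u :: tl).zip d with hEdef
    have hElen : E.length = tl.length + 1 := by
      simp [hEdef, hd, List.length_zip]
    have hch' : List.Chain' r ((u :: tl) ++ [u]) := by
      rw [List.cons_append]
      exact hchain
    have hmapfst : E.map Prod.fst = u :: tl :=
      List.map_fst_zip (by simp [hd])
    have hmapsnd : E.map Prod.snd = d :=
      List.map_snd_zip (by simp [hd])
    have hEnd : E.Nodup := by
      apply List.Nodup.of_map Prod.fst
      rw [hmapfst]; exact hnd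
    have hEsub : ∀ p ∈ E, p ∈ A := by
      intro p hp
      exact aux_chain'_zip_mem (u :: tl) u hch' p (by simpa [hd] using hp)
    set C : Finset (V × V) := E.toFinset with hCdef
    have hCsub : C ⊆ A := fun p hp => hEsub p (List.mem_toFinset.mp hp)
    have hCcard : C.card = tl.length + 1 := by
      rw [hCdef, List.toFinset_card_of_nodup hEnd, hElen]
    -- counting edges of the cycle at each vertex
    have key : ∀ (f : V × V → V), (E.map f).Nodup → ∀ v : V,
        (C.filter (fun p => f p = v)).card = if v ∈ E.map f then 1 else 0 := by
      intro f hndL v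
      by_cases hv : v ∈ E.map f
      · rw [if_pos hv]
        obtain ⟨p0, hp0, hfp0⟩ := List.mem_map.mp hv
        rw [Finset.card_eq_one]
        refine ⟨p0, ?_⟩
        ext q
        simp only [Finset.mem_filter, Finset.mem_singleton, hCdef, List.mem_toFinset]
        constructor
        · rintro ⟨hq, hfq⟩
          exact List.inj_on_of_nodup_map hndL hq hp0 (by rw [hfq, hfp0])
        · rintro rfl
          exact ⟨hp0, hfp0⟩
      · rw [if_neg hv, Finset.card_eq_zero, Finset.filter_eq_empty_iff]
        intro q hq hfq
        exact hv (List.mem_map.mpr ⟨q, List.mem_toFinset.mp hq, hfq⟩)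
    have hcountC : ∀ v : V, (C.filter (fun p => p.1 = v)).card
        = (C.filter (fun p => p.2 = v)).card := by
      intro v
      have hnds : (E.map Prod.snd).Nodup := by
        rw [hmapsnd, hd]
        exact (List.perm_append_singleton u tl).nodup_iff.mpr hnd
      rw [key Prod.fst (by rw [hmapfst]; exact hnd) v, key Prod.snd hnds v,
          hmapfst, hmapsnd, hd]
      simp only [List.mem_cons, List.mem_append, List.mem_singleton]
      by_cases hv : v = u <;> simp [hv, or_comm]
    have hE' : IsEulerian o (A \ C) := by
      rw [aux_isEulerian_iff]
      refine ⟨fun p hp => hE.1 p (Finset.mem_sdiff.mp hp).1, fun v => ?_⟩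
      have hsd : ∀ (P : V × V → Prop) [DecidablePred P],
          ((A \ C).filter P) = A.filter P \ C.filter P := by
        intro P _
        ext p
        simp only [Finset.mem_sdiff, Finset.mem_filter]
        tauto
      rw [hsd, hsd, Finset.card_sdiff_of_subset (Finset.filter_subset_filter _ hCsub),
          Finset.card_sdiff_of_subset (Finset.filter_subset_filter _ hCsub), hE.2 v, hcountC v]
    have hcards : (A \ C).card + C.card = A.card := Finset.card_sdiff_add_card_eq_card hCsub
    have hALn : (A \ C).card ≤ n := by omega
    have hev' : Even (A \ C).card := ih (A \ C) hALn hE'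
    have hdir : IsDirCycle o.dir (u :: tl) :=
      ⟨hnd, List.IsChain.imp (fun ⦃a b⦄ hab => hE.1 (a, b) hab) hchain⟩
    have hevlen : Even (tl.length + 1) := by
      rcases Nat.even_or_odd (tl.length + 1) with hel | hol
      · exact hel
      · exact absurd ⟨u :: tl, hdir, by simpa using hol⟩ hodd
    have hAeq : A.card = (A \ C).card + (tl.length + 1) := by omega
    rw [hAeq]
    exact hev'.add hevlen

end AuxEuler

theorem statement3 {V : Type*} [Fintype V] (G : SimpleGraph V) (D : ℕ)
    (h : ∃ o : GraphOrientation G, ¬ HasOddDirCycle o.dir ∧ ∀ v, outDeg o v ≤ D) :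
    ATNumber G ≤ D + 1 := by
  classical
  obtain ⟨o, hodd, hdeg⟩ := h
  have heven : ∀ A : Finset (V × V), IsEulerian o A → Even A.card :=
    fun A hA => aux_eulerian_even o hodd A.card A le_rfl hA
  have hemp : IsEulerian o (∅ : Finset (V × V)) := by
    constructor
    · intro p hp; simp at hp
    · intro v
      have h1 : IsEmpty {p : V × V // p ∈ (∅ : Finset (V × V)) ∧ p.1 = v} :=
        ⟨fun ⟨p, hp, _⟩ => by simp at hp⟩
      have h2 : IsEmpty {p : V × V // p ∈ (∅ : Finset (V × V)) ∧ p.2 = v} :=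
        ⟨fun ⟨p, hp, _⟩ => by simp at hp⟩
      rw [Nat.card_of_isEmpty, Nat.card_of_isEmpty]
  have hEO : EO o = 0 := by
    rw [EO, Nat.card_eq_zero]
    left
    exact ⟨fun ⟨A, hA, hoddA⟩ => (Nat.not_odd_iff_even.mpr (heven A hA)) hoddA⟩
  have hEE : EE o ≠ 0 := by
    rw [EE]
    have hne : Nonempty {A : Finset (V × V) // IsEulerian o A ∧ Even A.card} :=
      ⟨⟨∅, hemp, by simp⟩⟩
    have := Nat.card_pos (α := {A : Finset (V × V) // IsEulerian o A ∧ Even A.card})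
    omega
  exact Nat.sInf_le ⟨o, fun v => Nat.lt_succ_of_le (hdeg v),
    fun hcontra => hEE (hcontra.trans hEO)⟩
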